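/- Let c ≥ 1 and let d₁, …, d_c be integers with each dᵢ ≥ 2, and set d = d₁⋯d_c. Define H(𝐝) = Σ_{∅ ≠ S ⊆ {1,…,c}} ((1+y)(1+z))^{|S|−1} · Π_{i∈S} H(dᵢ) in ℤ[[y,z]]. Then for every integer p ≥ 1, the coefficient of y^p z^p in H(𝐝) is at least d − 1. (By Hirzebruch's formula this coefficient is the primitive Hodge number h^{p,p}_o(𝐝) = h^{p,p}(𝐝) − 1 of a smooth complete intersection of multidegree 𝐝 and dimension 2p, so this says h^{p,p}(𝐝) ≥ d.) -/

import Mathlib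

open MvPowerSeries

/-- `Q_d = Σ_{i,j ≥ 1} C(d, i+j) yⁱzʲ` as a power series in `ℤ[[y,z]]`
(`y = X 0`, `z = X 1`). -/
def Q (d : ℕ) : MvPowerSeries (Fin 2) ℤ :=
  fun e => if 1 ≤ e 0 ∧ 1 ≤ e 1 then (d.choose (e 0 + e 1) : ℤ) else 0

/-- `P_d = Σ_{i,j ≥ 0} C(d-1, i+j+1) yⁱzʲ` as a power series in `ℤ[[y,z]]`. -/
def P (d : ℕ) : MvPowerSeries (Fin 2) ℤ :=
  fun e => ((d - 1).choose (e 0 + e 1 + 1) : ℤ)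

/-- `H(d) = P_d · (1 - Q_d)⁻¹` (`1 - Q_d` is a unit of `ℤ[[y,z]]`, and
`Ring.inverse` gives its inverse). -/
noncomputable def H (d : ℕ) : MvPowerSeries (Fin 2) ℤ := P d * Ring.inverse (1 - Q d)

/-- `H(𝐝) = Σ_{∅ ≠ S ⊆ {1,…,c}} ((1+y)(1+z))^{|S|-1} · Π_{i∈S} H(dᵢ)`, the
generating series of the primitive Hodge numbers of a complete intersection of
multidegree `𝐝 = (d₁,…,d_c)`. -/
noncomputable def Hmulti {c : ℕ} (ds : Fin c → ℕ) : MvPowerSeries (Fin 2) ℤ :=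
  ∑ S ∈ Finset.univ.powerset.erase (∅ : Finset (Fin c)),
    ((1 + X 0) * (1 + X 1)) ^ (S.card - 1) * ∏ i ∈ S, H (ds i)

-- nonnegativity predicate
def NN (F : MvPowerSeries (Fin 2) ℤ) : Prop := ∀ e, 0 ≤ coeff e F

lemma NN.mul {A B} (hA : NN A) (hB : NN B) : NN (A * B) := by
  intro e
  rw [coeff_mul]
  exact Finset.sum_nonneg fun p _ => mul_nonneg (hA _) (hB _)

lemma coeff_mul_ge {A B} (hA : NN A) (hB : NN B) (e₁ e₂) :
    coeff e₁ A * coeff e₂ B ≤ coeff (e₁ + e₂) (A * B) := by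
  rw [coeff_mul]
  have hmem : ((e₁, e₂) : (Fin 2 →₀ ℕ) × (Fin 2 →₀ ℕ)) ∈ Finset.HasAntidiagonal.antidiagonal (e₁ + e₂) :=
    Finset.HasAntidiagonal.mem_antidiagonal.mpr rfl
  exact Finset.single_le_sum (fun p _ => mul_nonneg (hA _) (hB _)) hmem

lemma coeff_Q (d : ℕ) (e : Fin 2 →₀ ℕ) :
    coeff e (Q d) = if 1 ≤ e 0 ∧ 1 ≤ e 1 then (d.choose (e 0 + e 1) : ℤ) else 0 := rfl

lemma coeff_P (d : ℕ) (e : Fin 2 →₀ ℕ) :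
    coeff e (P d) = ((d - 1).choose (e 0 + e 1 + 1) : ℤ) := rfl

lemma NN_Q (d : ℕ) : NN (Q d) := by
  intro e
  rw [coeff_apply, Q]
  split <;> positivity

lemma NN_P (d : ℕ) : NN (P d) := by
  intro e
  rw [coeff_apply, P]
  positivity

lemma isUnit_one_sub_Q (d : ℕ) : IsUnit (1 - Q d) := by
  rw [MvPowerSeries.isUnit_iff_constantCoeff, map_sub, map_one]
  have : constantCoeff (Q d) = 0 := by
    rw [← coeff_zero_eq_constantCoeff, coeff_apply, Q]
    simp
  rw [this, sub_zero]
  exact isUnit_one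

lemma Rrec (d : ℕ) :
    Ring.inverse (1 - Q d) = 1 + Q d * Ring.inverse (1 - Q d) := by
  have h := Ring.mul_inverse_cancel _ (isUnit_one_sub_Q d)
  rw [one_sub_mul] at h
  exact sub_eq_iff_eq_add.mp h

lemma NN_R (d : ℕ) : NN (Ring.inverse (1 - Q d)) := by
  have key : ∀ n : ℕ, ∀ e : Fin 2 →₀ ℕ, e 0 + e 1 ≤ n →
      0 ≤ coeff e (Ring.inverse (1 - Q d)) := by
    intro n
    induction n with
    | zero =>
      intro e he
      rw [Rrec d, map_add, coeff_mul]
      have h1 : (0:ℤ) ≤ coeff e (1 : MvPowerSeries (Fin 2) ℤ) := by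
        rw [coeff_one]; split <;> norm_num
      refine add_nonneg h1 (Finset.sum_nonneg fun q hq => ?_)
      by_cases hc : 1 ≤ q.1 0 ∧ 1 ≤ q.1 1
      · exfalso
        have hsum := Finset.HasAntidiagonal.mem_antidiagonal.mp hq
        have h0 : q.1 0 + q.2 0 = e 0 := by rw [← hsum]; simp
        omega
      · have hz : coeff q.1 (Q d) = 0 := by rw [coeff_apply, Q, if_neg hc]
        rw [hz, zero_mul]
    | succ n ih =>
      intro e he
      rw [Rrec d, map_add, coeff_mul]
      have h1 : (0:ℤ) ≤ coeff e (1 : MvPowerSeries (Fin 2) ℤ) := by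
        rw [coeff_one]; split <;> norm_num
      refine add_nonneg h1 (Finset.sum_nonneg fun q hq => ?_)
      by_cases hc : 1 ≤ q.1 0 ∧ 1 ≤ q.1 1
      · have hsum := Finset.HasAntidiagonal.mem_antidiagonal.mp hq
        have h0 : q.1 0 + q.2 0 = e 0 := by rw [← hsum]; simp
        have h1' : q.1 1 + q.2 1 = e 1 := by rw [← hsum]; simp
        exact mul_nonneg (NN_Q d _) (ih q.2 (by omega))
      · have hz : coeff q.1 (Q d) = 0 := by rw [coeff_apply, Q, if_neg hc]
        rw [hz, zero_mul]
  intro e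
  exact key (e 0 + e 1) e le_rfl

lemma R_diag (d : ℕ) (hd : 2 ≤ d) (p : ℕ) :
    1 ≤ coeff (Finsupp.single 0 p + Finsupp.single 1 p) (Ring.inverse (1 - Q d)) := by
  induction p with
  | zero =>
    have h0 : (Finsupp.single (0 : Fin 2) 0 + Finsupp.single 1 0) = 0 := by simp
    have hQ0 : coeff 0 (Q d) = 0 := by rw [coeff_Q]; simp
    rw [h0, Rrec d, map_add, coeff_mul, Finsupp.antidiagonal_zero, Finset.sum_singleton,
      hQ0, zero_mul, add_zero, coeff_one, if_pos rfl]
  | succ p ih =>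
    have hsplit : (Finsupp.single (0:Fin 2) (p+1) + Finsupp.single 1 (p+1))
        = (Finsupp.single (0:Fin 2) 1 + Finsupp.single 1 1)
          + (Finsupp.single (0:Fin 2) p + Finsupp.single 1 p) := by
      rw [show p + 1 = 1 + p by omega, Finsupp.single_add, Finsupp.single_add]
      abel
    have hQ11 : (1:ℤ) ≤ coeff (Finsupp.single (0:Fin 2) 1 + Finsupp.single 1 1) (Q d) := by
      rw [coeff_Q]
      simp only [Finsupp.add_apply, Finsupp.single_apply]
      norm_num
      exact_mod_cast Nat.one_le_iff_ne_zero.mpr (Nat.choose_pos (by omega)).ne'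
    calc (1:ℤ) = 1 * 1 := by ring
    _ ≤ coeff (Finsupp.single (0:Fin 2) 1 + Finsupp.single 1 1) (Q d)
        * coeff (Finsupp.single (0:Fin 2) p + Finsupp.single 1 p) (Ring.inverse (1 - Q d)) :=
      mul_le_mul hQ11 ih zero_le_one (le_trans zero_le_one hQ11)
    _ ≤ coeff (Finsupp.single (0:Fin 2) (p+1) + Finsupp.single 1 (p+1)) (Q d * Ring.inverse (1 - Q d)) := by
      rw [hsplit]; exact coeff_mul_ge (NN_Q d) (NN_R d) _ _
    _ ≤ coeff (Finsupp.single (0:Fin 2) (p+1) + Finsupp.single 1 (p+1)) (Ring.inverse (1 - Q d)) := by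
      conv_rhs => rw [Rrec d]
      rw [map_add]
      have : coeff (Finsupp.single (0:Fin 2) (p+1) + Finsupp.single 1 (p+1))
          (1 : MvPowerSeries (Fin 2) ℤ) = 0 := by
        rw [coeff_one, if_neg]
        intro h
        have := DFunLike.congr_fun h (0 : Fin 2)
        simp at this
      rw [this, zero_add]

lemma NN_H (d : ℕ) : NN (H d) := NN.mul (NN_P d) (NN_R d)

lemma constCoeff_R (d : ℕ) : coeff 0 (Ring.inverse (1 - Q d)) = 1 := by
  have hQ0 : coeff 0 (Q d) = 0 := by rw [coeff_Q]; simp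
  rw [Rrec d, map_add, coeff_mul, Finsupp.antidiagonal_zero, Finset.sum_singleton,
    hQ0, zero_mul, add_zero, coeff_one, if_pos rfl]

lemma constCoeff_P (d : ℕ) (hd : 2 ≤ d) : coeff 0 (P d) = (d : ℤ) - 1 := by
  rw [coeff_P]
  simp only [Finsupp.coe_zero, Pi.zero_apply, Nat.zero_add, zero_add]
  rw [Nat.choose_one_right]
  omega

lemma constCoeff_H (d : ℕ) (hd : 2 ≤ d) : coeff 0 (H d) = (d : ℤ) - 1 := by
  rw [H, coeff_mul, Finsupp.antidiagonal_zero, Finset.sum_singleton,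
    constCoeff_R, mul_one, constCoeff_P d hd]

lemma H_diag (d : ℕ) (hd : 2 ≤ d) (p : ℕ) :
    (d : ℤ) - 1 ≤ coeff (Finsupp.single 0 p + Finsupp.single 1 p) (H d) := by
  have h := coeff_mul_ge (NN_P d) (NN_R d) 0 (Finsupp.single 0 p + Finsupp.single 1 p)
  rw [zero_add] at h
  rw [← H] at h
  refine le_trans ?_ h
  rw [constCoeff_P d hd]
  calc (d:ℤ) - 1 = ((d:ℤ)-1) * 1 := by ring
  _ ≤ ((d:ℤ)-1) * coeff (Finsupp.single 0 p + Finsupp.single 1 p) (Ring.inverse (1 - Q d)) :=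
    mul_le_mul_of_nonneg_left (R_diag d hd p) (by omega)

lemma NN_one : NN (1 : MvPowerSeries (Fin 2) ℤ) := by
  intro e; rw [coeff_one]; split <;> norm_num

lemma NN_X (i : Fin 2) : NN (X i : MvPowerSeries (Fin 2) ℤ) := by
  intro e; rw [coeff_X]; split <;> norm_num

lemma NN.add {A B} (hA : NN A) (hB : NN B) : NN (A + B) := by
  intro e; rw [map_add]; exact add_nonneg (hA e) (hB e)

lemma NN_U : NN (((1 + X 0) * (1 + X 1)) : MvPowerSeries (Fin 2) ℤ) :=
  NN.mul (NN.add NN_one (NN_X 0)) (NN.add NN_one (NN_X 1))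

lemma NN.pow {A} (hA : NN A) (k : ℕ) : NN (A ^ k) := by
  induction k with
  | zero => rw [pow_zero]; exact NN_one
  | succ k ih => rw [pow_succ]; exact NN.mul ih hA

lemma NN.prod {ι : Type*} (S : Finset ι) (f : ι → MvPowerSeries (Fin 2) ℤ)
    (hf : ∀ i ∈ S, NN (f i)) : NN (∏ i ∈ S, f i) :=
  Finset.prod_induction f NN (fun _ _ => NN.mul) NN_one hf

lemma constCoeff_U_pow (k : ℕ) :
    coeff 0 ((((1 + X 0) * (1 + X 1)) : MvPowerSeries (Fin 2) ℤ) ^ k) = 1 := by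
  rw [coeff_zero_eq_constantCoeff, map_pow, map_mul, map_add, map_add, map_one,
    constantCoeff_X, constantCoeff_X, add_zero, mul_one, one_pow]

lemma term_bound {c : ℕ} (ds : Fin c → ℕ) (hds : ∀ i, 2 ≤ ds i) (p : ℕ)
    (S : Finset (Fin c)) (hS : S.Nonempty) :
    ∏ i ∈ S, ((ds i : ℤ) - 1) ≤
      coeff (Finsupp.single 0 p + Finsupp.single 1 p)
        (((1 + X 0) * (1 + X 1)) ^ (S.card - 1) * ∏ i ∈ S, H (ds i)) := by
  set e : Fin 2 →₀ ℕ := Finsupp.single 0 p + Finsupp.single 1 p with he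
  have hNNprod : ∀ T : Finset (Fin c), NN (∏ i ∈ T, H (ds i)) :=
    fun T => NN.prod T _ (fun i _ => NN_H (ds i))
  have h := coeff_mul_ge (NN.pow NN_U (S.card - 1)) (hNNprod S) 0 e
  rw [zero_add, constCoeff_U_pow, one_mul] at h
  refine le_trans ?_ h
  obtain ⟨i₀, hi₀⟩ := hS
  rw [← Finset.mul_prod_erase S _ hi₀, ← Finset.mul_prod_erase S (fun i => H (ds i)) hi₀]
  have h2 := coeff_mul_ge (NN_H (ds i₀)) (hNNprod (S.erase i₀)) e 0
  rw [add_zero] at h2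
  refine le_trans ?_ h2
  have hc0 : coeff 0 (∏ i ∈ S.erase i₀, H (ds i)) = ∏ i ∈ S.erase i₀, ((ds i : ℤ) - 1) := by
    rw [coeff_zero_eq_constantCoeff, map_prod]
    exact Finset.prod_congr rfl fun i _ => by
      rw [← coeff_zero_eq_constantCoeff, constCoeff_H _ (hds i)]
  rw [hc0]
  have hnn : (0:ℤ) ≤ ∏ i ∈ S.erase i₀, ((ds i : ℤ) - 1) :=
    Finset.prod_nonneg fun i _ => by have := hds i; omega
  exact mul_le_mul_of_nonneg_right (H_diag (ds i₀) (hds i₀) p) hnn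

/-- Lemma 2.2(a): for `𝐝 = (d₁,…,d_c)` with `c ≥ 1` and each `dᵢ ≥ 2`, and
`d = d₁⋯d_c`, the coefficient of `y^p z^p` in `H(𝐝)` is at least `d - 1` for every
`p ≥ 1` (i.e. `h^{p,p}(𝐝) ≥ d`). -/
theorem stmt8 (c : ℕ) (hc : 1 ≤ c) (ds : Fin c → ℕ) (hds : ∀ i, 2 ≤ ds i)
    (p : ℕ) (hp : 1 ≤ p) :
    ((∏ i, ds i : ℕ) : ℤ) - 1 ≤
      coeff (Finsupp.single 0 p + Finsupp.single 1 p) (Hmulti ds) := by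
  rw [Hmulti, map_sum]
  have hsum : ((∏ i, ds i : ℕ) : ℤ) = ∑ S ∈ (Finset.univ : Finset (Fin c)).powerset,
      ∏ i ∈ S, ((ds i : ℤ) - 1) := by
    push_cast
    have : ∀ i : Fin c, ((ds i : ℤ)) = ((ds i : ℤ) - 1) + 1 := fun i => by ring
    rw [Finset.prod_congr rfl fun i _ => this i, Finset.prod_add]
    exact Finset.sum_congr rfl fun S _ => by simp
  have herase : (∅ : Finset (Fin c)) ∈ (Finset.univ : Finset (Fin c)).powerset :=
    Finset.empty_mem_powerset _
  have hsplit : (1:ℤ) + ∑ S ∈ (Finset.univ : Finset (Fin c)).powerset.erase ∅,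
      ∏ i ∈ S, ((ds i : ℤ) - 1) = ∑ S ∈ (Finset.univ : Finset (Fin c)).powerset,
      ∏ i ∈ S, ((ds i : ℤ) - 1) := by
    simpa using Finset.add_sum_erase _ (fun S => ∏ i ∈ S, ((ds i : ℤ) - 1)) herase
  have : ((∏ i, ds i : ℕ) : ℤ) - 1 =
      ∑ S ∈ (Finset.univ : Finset (Fin c)).powerset.erase ∅, ∏ i ∈ S, ((ds i : ℤ) - 1) := by
    rw [hsum, ← hsplit]; ring
  rw [this]
  refine Finset.sum_le_sum fun S hS => ?_
  exact term_bound ds hds p S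
    (Finset.nonempty_iff_ne_empty.mpr (Finset.ne_of_mem_erase hS))
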